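/- Let $p = (p_1,\ldots,p_N)$ with $p_1 < p_2$, $0 < h \le (p_2-p_1)/2$, and $p' = (p_1+h, p_2-h, p_3,\ldots,p_N)$. If at least $k-1$ of the values $p_3,\ldots,p_N$ are nonzero, then for all $n \ge k+1$ the inequality is strict: $P_p(Y_n \le k) > P_{p'}(Y_n \le k)$. -/

import Mathlib

/-- The probability of an event `E` for `n` i.i.d. draws from the distribution `p`
on `{1, …, N}`: the sum of the product weights of the outcome sequences in `E`. -/
noncomputable def prob {N : ℕ} (p : Fin N → ℝ) {n : ℕ} (E : Set (Fin n → Fin N)) : ℝ :=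
  ∑ ω : Fin n → Fin N, Set.indicator E (fun ω => ∏ i, p (ω i)) ω

/-- The number of distinct values drawn, `Y_n`. -/
noncomputable def distinctCount {N n : ℕ} (ω : Fin n → Fin N) : ℕ :=
  (Finset.univ.image ω).card

section Aux

open Finset

variable {N n : ℕ}

/-- Merge values `0` and `1` : replace every occurrence of value `1` by `e0`. -/
def mrg (e0 : Fin N) (ω : Fin n → Fin N) : Fin n → Fin N :=
  fun i => if (ω i : ℕ) = 1 then e0 else ω i

/-- The summand of `prob` for the event `Y_n ≤ k`. -/
noncomputable def Gfun (k : ℕ) (r : Fin N → ℝ) (ω : Fin n → Fin N) : ℝ :=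
  if distinctCount ω ≤ k then ∏ i, r (ω i) else 0

lemma pow_balance_key (x y h : ℝ) (m : ℕ) :
    x ^ m + y ^ m - ((x + h) ^ m + (y - h) ^ m)
      = (∑ i ∈ Finset.range m,
          (y ^ i * (y - h) ^ (m - 1 - i) - (x + h) ^ i * x ^ (m - 1 - i))) * h := by
  have h1 := geom_sum₂_mul y (y - h) m
  have h2 := geom_sum₂_mul (x + h) x m
  rw [Finset.sum_sub_distrib, sub_mul]
  linear_combination h2 - h1

lemma pow_balance_terms (x y h : ℝ) (m : ℕ) (hx : 0 ≤ x) (hh0 : 0 < h)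
    (hxy : x + h ≤ y - h) :
    ∀ i ∈ Finset.range m,
      0 ≤ y ^ i * (y - h) ^ (m - 1 - i) - (x + h) ^ i * x ^ (m - 1 - i) := by
  intro i _
  have h1 : (0:ℝ) ≤ x + h := by linarith
  have h2 : x + h ≤ y := by linarith
  have h3 : x ≤ y - h := by linarith
  have := mul_le_mul (pow_le_pow_left₀ h1 h2 i) (pow_le_pow_left₀ hx h3 (m - 1 - i))
    (pow_nonneg hx _) (pow_nonneg (by linarith : (0:ℝ) ≤ y) i)
  linarith

lemma pow_balance_le (x y h : ℝ) (m : ℕ) (hx : 0 ≤ x) (hh0 : 0 < h)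
    (hxy : x + h ≤ y - h) : (x + h) ^ m + (y - h) ^ m ≤ x ^ m + y ^ m := by
  have key := pow_balance_key x y h m
  have hsum : 0 ≤ ∑ i ∈ Finset.range m,
      (y ^ i * (y - h) ^ (m - 1 - i) - (x + h) ^ i * x ^ (m - 1 - i)) :=
    Finset.sum_nonneg (pow_balance_terms x y h m hx hh0 hxy)
  nlinarith [mul_nonneg hsum hh0.le]

lemma pow_balance_lt (x y h : ℝ) (m : ℕ) (hx : 0 ≤ x) (hh0 : 0 < h)
    (hxy : x + h ≤ y - h) (hm : 2 ≤ m) :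
    (x + h) ^ m + (y - h) ^ m < x ^ m + y ^ m := by
  have key := pow_balance_key x y h m
  have hmem : m - 1 ∈ Finset.range m := by simp; omega
  have hpos : 0 < y ^ (m-1) * (y-h) ^ (m-1-(m-1)) - (x+h) ^ (m-1) * x ^ (m-1-(m-1)) := by
    have h0 : m - 1 - (m - 1) = 0 := by omega
    rw [h0, pow_zero, pow_zero, mul_one, mul_one]
    exact sub_pos.2 (pow_lt_pow_left₀ (by linarith) (by linarith) (by omega))
  have hsum : 0 < ∑ i ∈ Finset.range m,
      (y ^ i * (y - h) ^ (m - 1 - i) - (x + h) ^ i * x ^ (m - 1 - i)) :=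
    Finset.sum_pos' (pow_balance_terms x y h m hx hh0 hxy) ⟨m - 1, hmem, hpos⟩
  nlinarith [mul_pos hsum hh0]

/-- Evaluation of the fiber sum over `{ω | mrg e0 ω = τ}` of `Gfun`,
for a merged configuration `τ` avoiding value `1` and using value `0`. -/
lemma fiber_eval (e0 e1 : Fin N) (he0 : (e0 : ℕ) = 0) (he1 : (e1 : ℕ) = 1)
    (k : ℕ) (r : Fin N → ℝ) (τ : Fin n → Fin N)
    (h1 : ∀ i, (τ i : ℕ) ≠ 1)
    (hA : (univ.filter (fun i => (τ i : ℕ) = 0)).Nonempty) :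
    ∑ ω ∈ univ.filter (fun ω => mrg e0 ω = τ), Gfun k r ω
      = (∏ i ∈ univ.filter (fun i => (τ i : ℕ) ≠ 0), r (τ i)) *
        ((if ((univ.filter (fun i => (τ i : ℕ) ≠ 0)).image τ).card + 1 ≤ k
            then r e0 ^ (univ.filter (fun i : Fin n => (τ i : ℕ) = 0)).card
              + r e1 ^ (univ.filter (fun i : Fin n => (τ i : ℕ) = 0)).card else 0)
          + (if ((univ.filter (fun i => (τ i : ℕ) ≠ 0)).image τ).card + 2 ≤ k
              then (r e0 + r e1) ^ (univ.filter (fun i : Fin n => (τ i : ℕ) = 0)).card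
                - r e0 ^ (univ.filter (fun i : Fin n => (τ i : ℕ) = 0)).card
                - r e1 ^ (univ.filter (fun i : Fin n => (τ i : ℕ) = 0)).card else 0)) := by
  have h01 : e0 ≠ e1 := by
    intro hE
    rw [Fin.ext_iff, he0, he1] at hE
    omega
  set A := univ.filter (fun i : Fin n => (τ i : ℕ) = 0) with hAdef
  set B := univ.filter (fun i : Fin n => (τ i : ℕ) ≠ 0) with hBdef
  set m := A.card with hmdef
  set D := (B.image τ).card with hDdef
  set R := ∏ i ∈ B, r (τ i) with hRdef
  set S : Fin n → Finset (Fin N) :=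
    fun i => if (τ i : ℕ) = 0 then ({e0, e1} : Finset (Fin N)) else {τ i} with hSdef
  have hBval : ∀ i ∈ B, 2 ≤ (τ i : ℕ) := by
    intro i hi
    rw [hBdef, mem_filter] at hi
    have := h1 i
    omega
  -- the fiber is a `piFinset`
  have hfib : univ.filter (fun ω : Fin n → Fin N => mrg e0 ω = τ) = Fintype.piFinset S := by
    ext ω
    simp only [mem_filter, mem_univ, true_and, Fintype.mem_piFinset, funext_iff, mrg]
    constructor
    · intro hω i
      have hi := hω i
      by_cases hτ : (τ i : ℕ) = 0
      · simp only [hSdef, hτ, if_true, mem_insert, mem_singleton]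
        by_cases hω1 : (ω i : ℕ) = 1
        · right; exact Fin.ext (by rw [hω1, he1])
        · left
          rw [if_neg hω1] at hi
          rw [hi]
          exact Fin.ext (by rw [he0, hτ])
      · simp only [hSdef, hτ, if_false, mem_singleton]
        by_cases hω1 : (ω i : ℕ) = 1
        · rw [if_pos hω1] at hi
          exact absurd (by rw [← hi, he0]) hτ
        · rwa [if_neg hω1] at hi
    · intro hω i
      have hi := hω i
      by_cases hτ : (τ i : ℕ) = 0
      · simp only [hSdef, hτ, if_true, mem_insert, mem_singleton] at hi
        rcases hi with hi | hi
        · rw [hi, if_neg (by rw [he0]; omega)]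
          exact Fin.ext (by rw [he0, hτ])
        · rw [hi, if_pos (by rw [he1])]
          exact Fin.ext (by rw [he0, hτ])
      · simp only [hSdef, hτ, if_false, mem_singleton] at hi
        rw [hi, if_neg (h1 i)]
  have hωB : ∀ ω ∈ Fintype.piFinset S, ∀ i ∈ B, ω i = τ i := by
    intro ω hω i hi
    have := (Fintype.mem_piFinset.1 hω) i
    rw [hBdef, mem_filter] at hi
    rw [hSdef] at this
    simp only [if_neg hi.2, mem_singleton] at this
    exact this
  have hωA : ∀ ω ∈ Fintype.piFinset S, ∀ i ∈ A, ω i = e0 ∨ ω i = e1 := by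
    intro ω hω i hi
    have := (Fintype.mem_piFinset.1 hω) i
    rw [hAdef, mem_filter] at hi
    rw [hSdef] at this
    simp only [if_pos hi.2, mem_insert, mem_singleton] at this
    exact this
  have hcount : ∀ ω ∈ Fintype.piFinset S, distinctCount ω = (A.image ω).card + D := by
    intro ω hω
    have hsplit : (univ : Finset (Fin n)).image ω = A.image ω ∪ B.image τ := by
      conv_lhs => rw [← filter_union_filter_not_eq (fun i : Fin n => (τ i : ℕ) = 0) univ]
      rw [image_union]
      congr 1
      exact image_congr (fun i hi => hωB ω hω i hi)
    have hdisj : Disjoint (A.image ω) (B.image τ) := by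
      rw [disjoint_left]
      intro x hx1 hx2
      obtain ⟨i, hi, rfl⟩ := mem_image.1 hx1
      obtain ⟨j, hj, hji⟩ := mem_image.1 hx2
      have h2 := hBval j hj
      rw [hji] at h2
      rcases hωA ω hω i hi with h' | h'
      · rw [h', he0] at h2; omega
      · rw [h', he1] at h2; omega
    unfold distinctCount
    rw [hsplit, card_union_of_disjoint hdisj]
  have himA : ∀ ω ∈ Fintype.piFinset S, image ω A ⊆ {e0, e1} := by
    intro ω hω x hx
    obtain ⟨i, hi, rfl⟩ := mem_image.1 hx
    rcases hωA ω hω i hi with h' | h' <;> simp [h']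
  rw [hfib]
  by_cases h2 : D + 2 ≤ k
  · have hG : ∀ ω ∈ Fintype.piFinset S, Gfun k r ω = ∏ i, r (ω i) := by
      intro ω hω
      unfold Gfun
      rw [if_pos]
      rw [hcount ω hω]
      have hle2 := card_le_card (himA ω hω)
      rw [card_pair h01] at hle2
      omega
    rw [sum_congr rfl hG, ← Finset.prod_univ_sum]
    have hfac : ∀ i : Fin n,
        (∑ x ∈ S i, r x) = if (τ i : ℕ) = 0 then r e0 + r e1 else r (τ i) := by
      intro i
      simp only [hSdef]
      by_cases hτ : (τ i : ℕ) = 0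
      · rw [if_pos hτ, if_pos hτ, sum_pair h01]
      · rw [if_neg hτ, if_neg hτ, sum_singleton]
    rw [prod_congr rfl (fun i _ => hfac i), prod_ite, prod_const]
    rw [if_pos (by omega : D + 1 ≤ k), if_pos h2]
    ring
  · by_cases hk' : D + 1 ≤ k
    · set ω0 : Fin n → Fin N := fun i => if (τ i : ℕ) = 0 then e0 else τ i with hω0def
      set ω1 : Fin n → Fin N := fun i => if (τ i : ℕ) = 0 then e1 else τ i with hω1def
      have hω0mem : ω0 ∈ Fintype.piFinset S := by
        rw [Fintype.mem_piFinset]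
        intro i
        simp only [hSdef, hω0def]
        by_cases hτ : (τ i : ℕ) = 0 <;> simp [hτ]
      have hω1mem : ω1 ∈ Fintype.piFinset S := by
        rw [Fintype.mem_piFinset]
        intro i
        simp only [hSdef, hω1def]
        by_cases hτ : (τ i : ℕ) = 0 <;> simp [hτ]
      obtain ⟨i0, hi0⟩ := hA
      have hτ0 : (τ i0 : ℕ) = 0 := by
        rw [hAdef, mem_filter] at hi0
        exact hi0.2
      have hne : ω0 ≠ ω1 := by
        intro hE
        have hEi := congrFun hE i0
        simp only [hω0def, hω1def, if_pos hτ0] at hEi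
        exact h01 hEi
      have hCsub : ({ω0, ω1} : Finset (Fin n → Fin N)) ⊆ Fintype.piFinset S := by
        intro x hx
        rcases mem_insert.1 hx with rfl | hx
        · exact hω0mem
        · rw [mem_singleton.1 hx]; exact hω1mem
      rw [← Finset.sum_sdiff hCsub]
      have hzero : ∀ ω ∈ Fintype.piFinset S \ {ω0, ω1}, Gfun k r ω = 0 := by
        intro ω hω'
        obtain ⟨hω, hωC⟩ := mem_sdiff.1 hω'
        have hne0 : ω ≠ ω0 := fun hE => hωC (by rw [hE]; exact mem_insert_self _ _)
        have hne1 : ω ≠ ω1 := fun hE =>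
          hωC (by rw [hE]; exact mem_insert_of_mem (mem_singleton_self _))
        have hex1 : ∃ i ∈ A, ω i = e1 := by
          by_contra hcon
          push_neg at hcon
          apply hne0
          funext i
          by_cases hτ : (τ i : ℕ) = 0
          · have hiA : i ∈ A := by rw [hAdef, mem_filter]; exact ⟨mem_univ _, hτ⟩
            rcases hωA ω hω i hiA with h' | h'
            · rw [h']; simp only [hω0def, if_pos hτ]
            · exact absurd h' (hcon i hiA)
          · have hiB : i ∈ B := by rw [hBdef, mem_filter]; exact ⟨mem_univ _, hτ⟩
            rw [hωB ω hω i hiB]; simp only [hω0def, if_neg hτ]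
        have hex0 : ∃ i ∈ A, ω i = e0 := by
          by_contra hcon
          push_neg at hcon
          apply hne1
          funext i
          by_cases hτ : (τ i : ℕ) = 0
          · have hiA : i ∈ A := by rw [hAdef, mem_filter]; exact ⟨mem_univ _, hτ⟩
            rcases hωA ω hω i hiA with h' | h'
            · exact absurd h' (hcon i hiA)
            · rw [h']; simp only [hω1def, if_pos hτ]
          · have hiB : i ∈ B := by rw [hBdef, mem_filter]; exact ⟨mem_univ _, hτ⟩
            rw [hωB ω hω i hiB]; simp only [hω1def, if_neg hτ]
        obtain ⟨i1, hi1A, hi1⟩ := hex1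
        obtain ⟨i2, hi2A, hi2⟩ := hex0
        have hsub2 : ({e0, e1} : Finset (Fin N)) ⊆ image ω A := by
          intro x hx
          rcases mem_insert.1 hx with rfl | hx
          · exact mem_image.2 ⟨i2, hi2A, hi2⟩
          · rw [mem_singleton.1 hx]; exact mem_image.2 ⟨i1, hi1A, hi1⟩
        have hcard2 : 2 ≤ (image ω A).card := by
          have hc := card_le_card hsub2
          rwa [card_pair h01] at hc
        unfold Gfun
        rw [if_neg (show ¬ distinctCount ω ≤ k by rw [hcount ω hω]; omega)]
      rw [sum_eq_zero hzero, zero_add, sum_pair hne]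
      have hcnt0 : distinctCount ω0 = D + 1 := by
        rw [hcount ω0 hω0mem]
        have him : image ω0 A = {e0} := by
          apply Finset.eq_singleton_iff_nonempty_unique_mem.2
          refine ⟨Finset.Nonempty.image ⟨i0, hi0⟩ ω0, ?_⟩
          intro x hx
          obtain ⟨i, hi, rfl⟩ := mem_image.1 hx
          rw [hAdef, mem_filter] at hi
          simp only [hω0def, if_pos hi.2]
        rw [him, card_singleton]
        omega
      have hcnt1 : distinctCount ω1 = D + 1 := by
        rw [hcount ω1 hω1mem]
        have him : image ω1 A = {e1} := by
          apply Finset.eq_singleton_iff_nonempty_unique_mem.2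
          refine ⟨Finset.Nonempty.image ⟨i0, hi0⟩ ω1, ?_⟩
          intro x hx
          obtain ⟨i, hi, rfl⟩ := mem_image.1 hx
          rw [hAdef, mem_filter] at hi
          simp only [hω1def, if_pos hi.2]
        rw [him, card_singleton]
        omega
      have hGω0 : Gfun k r ω0 = r e0 ^ m * R := by
        unfold Gfun
        rw [if_pos (by rw [hcnt0]; omega)]
        have : ∀ i : Fin n, r (ω0 i) = if (τ i : ℕ) = 0 then r e0 else r (τ i) := by
          intro i
          simp only [hω0def]
          by_cases hτ : (τ i : ℕ) = 0 <;> simp [hτ]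
        rw [prod_congr rfl (fun i _ => this i), prod_ite, prod_const]
      have hGω1 : Gfun k r ω1 = r e1 ^ m * R := by
        unfold Gfun
        rw [if_pos (by rw [hcnt1]; omega)]
        have : ∀ i : Fin n, r (ω1 i) = if (τ i : ℕ) = 0 then r e1 else r (τ i) := by
          intro i
          simp only [hω1def]
          by_cases hτ : (τ i : ℕ) = 0 <;> simp [hτ]
        rw [prod_congr rfl (fun i _ => this i), prod_ite, prod_const]
      rw [hGω0, hGω1, if_pos hk', if_neg h2]
      ring
    · have hzero : ∀ ω ∈ Fintype.piFinset S, Gfun k r ω = 0 := by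
        intro ω hω
        have h1c : 1 ≤ (image ω A).card := card_pos.2 (hA.image ω)
        unfold Gfun
        rw [if_neg (show ¬ distinctCount ω ≤ k by rw [hcount ω hω]; omega)]
      rw [sum_eq_zero hzero, if_neg hk', if_neg h2]
      ring

/-- Comparison of fiber sums: the balanced distribution `q` gives at most the
probability of `p` on every fiber. -/
lemma fiber_le (e0 e1 : Fin N) (he0 : (e0 : ℕ) = 0) (he1 : (e1 : ℕ) = 1)
    (k : ℕ) (p q : Fin N → ℝ) (hp : ∀ i, 0 ≤ p i)
    (hagree : ∀ i : Fin N, 2 ≤ (i : ℕ) → q i = p i)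
    (hsum2 : q e0 + q e1 = p e0 + p e1)
    (hle : ∀ m : ℕ, q e0 ^ m + q e1 ^ m ≤ p e0 ^ m + p e1 ^ m)
    (τ : Fin n → Fin N) :
    ∑ ω ∈ univ.filter (fun ω => mrg e0 ω = τ), Gfun k q ω
      ≤ ∑ ω ∈ univ.filter (fun ω => mrg e0 ω = τ), Gfun k p ω := by
  by_cases h1 : ∀ i, (τ i : ℕ) ≠ 1
  · by_cases hA : (univ.filter (fun i : Fin n => (τ i : ℕ) = 0)).Nonempty
    · rw [fiber_eval e0 e1 he0 he1 k q τ h1 hA, fiber_eval e0 e1 he0 he1 k p τ h1 hA]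
      have hB2 : ∀ i ∈ univ.filter (fun i : Fin n => (τ i : ℕ) ≠ 0), 2 ≤ (τ i : ℕ) := by
        intro i hi
        rw [mem_filter] at hi
        have := h1 i
        omega
      have hR : (∏ i ∈ univ.filter (fun i : Fin n => (τ i : ℕ) ≠ 0), q (τ i))
          = ∏ i ∈ univ.filter (fun i : Fin n => (τ i : ℕ) ≠ 0), p (τ i) :=
        prod_congr rfl fun i hi => hagree _ (hB2 i hi)
      rw [hR, hsum2]
      have hRpos : 0 ≤ ∏ i ∈ univ.filter (fun i : Fin n => (τ i : ℕ) ≠ 0), p (τ i) :=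
        prod_nonneg fun i _ => hp _
      apply mul_le_mul_of_nonneg_left _ hRpos
      set D := ((univ.filter (fun i : Fin n => (τ i : ℕ) ≠ 0)).image τ).card with hD
      set m := (univ.filter (fun i : Fin n => (τ i : ℕ) = 0)).card with hm
      by_cases h2 : D + 2 ≤ k
      · rw [if_pos (by omega : D + 1 ≤ k), if_pos h2, if_pos (by omega : D + 1 ≤ k), if_pos h2]
        have := hle m
        linarith
      · by_cases hk' : D + 1 ≤ k
        · rw [if_pos hk', if_neg h2, if_pos hk', if_neg h2]
          have := hle m
          linarith
        · rw [if_neg hk', if_neg h2, if_neg hk', if_neg h2]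
    · -- no position carries value `0` (nor `1`): the fiber is `{τ}`
      have hτ2 : ∀ i, 2 ≤ (τ i : ℕ) := by
        intro i
        have h0 : (τ i : ℕ) ≠ 0 := by
          intro hc
          exact hA ⟨i, mem_filter.2 ⟨mem_univ _, hc⟩⟩
        have := h1 i
        omega
      have hfib : univ.filter (fun ω : Fin n → Fin N => mrg e0 ω = τ) = {τ} := by
        ext ω
        rw [mem_filter, mem_singleton]
        constructor
        · rintro ⟨-, hω⟩
          funext i
          have hi := congrFun hω i
          simp only [mrg] at hi
          by_cases hω1 : (ω i : ℕ) = 1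
          · rw [if_pos hω1] at hi
            have := hτ2 i
            rw [← hi, he0] at this
            omega
          · rwa [if_neg hω1] at hi
        · rintro rfl
          refine ⟨mem_univ _, ?_⟩
          funext i
          simp only [mrg]
          rw [if_neg (by have := hτ2 i; omega)]
      rw [hfib, sum_singleton, sum_singleton]
      unfold Gfun
      have : (∏ i, q (τ i)) = ∏ i, p (τ i) :=
        prod_congr rfl fun i _ => hagree _ (hτ2 i)
      rw [this]
  · -- the fiber is empty
    push_neg at h1
    obtain ⟨i, hi⟩ := h1
    have hfib : univ.filter (fun ω : Fin n → Fin N => mrg e0 ω = τ) = ∅ := by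
      rw [filter_eq_empty_iff]
      intro ω _ hτ
      have hE := congrFun hτ i
      simp only [mrg] at hE
      by_cases hω1 : (ω i : ℕ) = 1
      · rw [if_pos hω1] at hE
        rw [← hE, he0] at hi
        omega
      · rw [if_neg hω1] at hE
        rw [← hE] at hi
        exact hω1 hi
    rw [hfib, sum_empty, sum_empty]

/-- Strict comparison of fiber sums, for a fiber with at least two merged
positions, exactly `k - 1` distinct other values, and positive weight. -/
lemma fiber_lt (e0 e1 : Fin N) (he0 : (e0 : ℕ) = 0) (he1 : (e1 : ℕ) = 1)
    (k : ℕ) (p q : Fin N → ℝ)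
    (hagree : ∀ i : Fin N, 2 ≤ (i : ℕ) → q i = p i)
    (hstrict : ∀ m : ℕ, 2 ≤ m → q e0 ^ m + q e1 ^ m < p e0 ^ m + p e1 ^ m)
    (τ : Fin n → Fin N) (h1 : ∀ i, (τ i : ℕ) ≠ 1)
    (hA2 : 2 ≤ (univ.filter (fun i : Fin n => (τ i : ℕ) = 0)).card)
    (hD : ((univ.filter (fun i : Fin n => (τ i : ℕ) ≠ 0)).image τ).card + 1 = k)
    (hRpos : 0 < ∏ i ∈ univ.filter (fun i : Fin n => (τ i : ℕ) ≠ 0), p (τ i)) :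
    ∑ ω ∈ univ.filter (fun ω => mrg e0 ω = τ), Gfun k q ω
      < ∑ ω ∈ univ.filter (fun ω => mrg e0 ω = τ), Gfun k p ω := by
  have hA : (univ.filter (fun i : Fin n => (τ i : ℕ) = 0)).Nonempty :=
    card_pos.1 (by omega)
  rw [fiber_eval e0 e1 he0 he1 k q τ h1 hA, fiber_eval e0 e1 he0 he1 k p τ h1 hA]
  have hB2 : ∀ i ∈ univ.filter (fun i : Fin n => (τ i : ℕ) ≠ 0), 2 ≤ (τ i : ℕ) := by
    intro i hi
    rw [mem_filter] at hi
    have := h1 i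
    omega
  have hR : (∏ i ∈ univ.filter (fun i : Fin n => (τ i : ℕ) ≠ 0), q (τ i))
      = ∏ i ∈ univ.filter (fun i : Fin n => (τ i : ℕ) ≠ 0), p (τ i) :=
    prod_congr rfl fun i hi => hagree _ (hB2 i hi)
  rw [hR]
  apply mul_lt_mul_of_pos_left _ hRpos
  set D := ((univ.filter (fun i : Fin n => (τ i : ℕ) ≠ 0)).image τ).card with hDdef
  set m := (univ.filter (fun i : Fin n => (τ i : ℕ) = 0)).card with hmdef
  rw [if_pos (by omega : D + 1 ≤ k), if_neg (by omega : ¬ D + 2 ≤ k),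
    if_pos (by omega : D + 1 ≤ k), if_neg (by omega : ¬ D + 2 ≤ k)]
  have := hstrict m hA2
  linarith

end Aux

/-- Theorem 6.1 (strict form): if moreover at least `k - 1` of the values
`p_3, …, p_N` are nonzero, then for all `n ≥ k + 1` the inequality is strict. -/
theorem stmt_18 (N : ℕ) (hN : 2 ≤ N) (p : Fin N → ℝ) (hp : ∀ i, 0 ≤ p i)
    (hsum : ∑ i, p i = 1) (h : ℝ)
    (hlt : p ⟨0, by omega⟩ < p ⟨1, by omega⟩) (hh0 : 0 < h)
    (hh : h ≤ (p ⟨1, by omega⟩ - p ⟨0, by omega⟩) / 2)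
    (n k : ℕ) (hk1 : 1 ≤ k) (hkN : k ≤ N - 1)
    (hnz : k - 1 ≤ (Finset.univ.filter (fun i : Fin N => 2 ≤ (i : ℕ) ∧ p i ≠ 0)).card)
    (hn : k + 1 ≤ n) :
    prob (fun i : Fin N => if (i : ℕ) = 0 then p i + h else if (i : ℕ) = 1 then p i - h else p i)
        {ω : Fin n → Fin N | distinctCount ω ≤ k}
      < prob p {ω : Fin n → Fin N | distinctCount ω ≤ k} := by
  set e0 : Fin N := ⟨0, by omega⟩ with he0def
  set e1 : Fin N := ⟨1, by omega⟩ with he1def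
  have he0 : (e0 : ℕ) = 0 := rfl
  have he1 : (e1 : ℕ) = 1 := rfl
  have hlt' : p e0 < p e1 := hlt
  have hh' : h ≤ (p e1 - p e0) / 2 := hh
  set q : Fin N → ℝ :=
    fun i : Fin N => if (i : ℕ) = 0 then p i + h else if (i : ℕ) = 1 then p i - h else p i
    with hqdef
  have hq0 : q e0 = p e0 + h := by simp [hqdef, he0]
  have hq1 : q e1 = p e1 - h := by simp [hqdef, he1]
  have hagree : ∀ i : Fin N, 2 ≤ (i : ℕ) → q i = p i := by
    intro i hi
    simp only [hqdef]
    rw [if_neg (by omega), if_neg (by omega)]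
  have hbal : p e0 + h ≤ p e1 - h := by linarith
  have hle : ∀ m : ℕ, q e0 ^ m + q e1 ^ m ≤ p e0 ^ m + p e1 ^ m := by
    intro m
    rw [hq0, hq1]
    exact pow_balance_le _ _ _ m (hp e0) hh0 hbal
  have hsum2 : q e0 + q e1 = p e0 + p e1 := by rw [hq0, hq1]; ring
  have hstrict : ∀ m : ℕ, 2 ≤ m → q e0 ^ m + q e1 ^ m < p e0 ^ m + p e1 ^ m := by
    intro m hm
    rw [hq0, hq1]
    exact pow_balance_lt _ _ _ m (hp e0) hh0 hbal hm
  have hprob : ∀ r : Fin N → ℝ,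
      prob r {ω : Fin n → Fin N | distinctCount ω ≤ k} = ∑ ω : Fin n → Fin N, Gfun k r ω := by
    intro r
    unfold prob Gfun
    refine Finset.sum_congr rfl fun ω _ => ?_
    by_cases hω : distinctCount ω ≤ k
    · rw [Set.indicator_of_mem
        (show ω ∈ {ω : Fin n → Fin N | distinctCount ω ≤ k} from hω), if_pos hω]
    · rw [Set.indicator_of_notMem
        (show ω ∉ {ω : Fin n → Fin N | distinctCount ω ≤ k} from hω), if_neg hω]
  rw [hprob, hprob]
  rw [← Finset.sum_fiberwise Finset.univ (mrg e0) (Gfun k q),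
    ← Finset.sum_fiberwise Finset.univ (mrg e0) (Gfun k p)]
  apply Finset.sum_lt_sum
  · intro τ _
    exact fiber_le e0 e1 he0 he1 k p q hp hagree hsum2 hle τ
  · -- construction of the strict fiber
    obtain ⟨T, hTsub, hTcard⟩ := Finset.exists_subset_card_eq hnz
    have hT2 : ∀ x ∈ T, 2 ≤ (x : ℕ) ∧ p x ≠ 0 := fun x hx => (Finset.mem_filter.1 (hTsub hx)).2
    set t := n - (k - 1) with htdef
    have ht2 : 2 ≤ t := by omega
    have htk : t + (k - 1) = n := by omega
    set σ := T.orderIsoOfFin hTcard with hσdef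
    set σ' : ℕ → Fin N := fun a => if ha : a < k - 1 then (σ ⟨a, ha⟩ : Fin N) else e0
      with hσ'def
    have hσ'T : ∀ a, a < k - 1 → σ' a ∈ T := by
      intro a ha
      simp only [hσ'def]
      rw [dif_pos ha]
      exact (σ ⟨a, ha⟩).2
    have hσ'surj : ∀ x ∈ T, ∃ a, a < k - 1 ∧ σ' a = x := by
      intro x hx
      refine ⟨(σ.symm ⟨x, hx⟩ : Fin (k - 1)), (σ.symm ⟨x, hx⟩).isLt, ?_⟩
      simp only [hσ'def]
      rw [dif_pos (σ.symm ⟨x, hx⟩).isLt, Fin.eta]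
      rw [OrderIso.apply_symm_apply]
    set τs : Fin n → Fin N := fun j => if (j : ℕ) < t then e0 else σ' ((j : ℕ) - t)
      with hτsdef
    have h1s : ∀ i : Fin n, (τs i : ℕ) ≠ 1 := by
      intro i
      simp only [hτsdef]
      by_cases hj : (i : ℕ) < t
      · rw [if_pos hj, he0]; omega
      · rw [if_neg hj]
        have hmem := hσ'T ((i : ℕ) - t) (by have := i.isLt; omega)
        have := (hT2 _ hmem).1
        omega
    have hBset : Finset.univ.filter (fun i : Fin n => (τs i : ℕ) ≠ 0)
        = Finset.univ.filter (fun i : Fin n => ¬ (i : ℕ) < t) := by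
      ext i
      simp only [Finset.mem_filter, Finset.mem_univ, true_and]
      by_cases hj : (i : ℕ) < t
      · simp only [hτsdef, if_pos hj, he0]
        simp [hj]
      · simp only [hτsdef, if_neg hj]
        have hmem := hσ'T ((i : ℕ) - t) (by have := i.isLt; omega)
        have := (hT2 _ hmem).1
        constructor
        · intro _; exact hj
        · intro _; omega
    have himg : (Finset.univ.filter (fun i : Fin n => ¬ (i : ℕ) < t)).image τs = T := by
      ext x
      simp only [Finset.mem_image, Finset.mem_filter, Finset.mem_univ, true_and]
      constructor
      · rintro ⟨j, hj, rfl⟩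
        simp only [hτsdef, if_neg hj]
        exact hσ'T ((j : ℕ) - t) (by have := j.isLt; omega)
      · intro hx
        obtain ⟨a, ha, hax⟩ := hσ'surj x hx
        refine ⟨⟨t + a, by omega⟩, by show ¬ t + a < t; omega, ?_⟩
        simp only [hτsdef]
        rw [if_neg (by show ¬ t + a < t; omega)]
        show σ' (t + a - t) = x
        have hta : t + a - t = a := by omega
        rw [hta, hax]
    refine ⟨τs, Finset.mem_univ _, ?_⟩
    refine fiber_lt e0 e1 he0 he1 k p q hagree hstrict τs h1s ?_ ?_ ?_
    · -- at least two merged positions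
      have hsub : ({⟨0, by omega⟩, ⟨1, by omega⟩} : Finset (Fin n))
          ⊆ Finset.univ.filter (fun i : Fin n => (τs i : ℕ) = 0) := by
        intro x hx
        rw [Finset.mem_filter]
        refine ⟨Finset.mem_univ _, ?_⟩
        rcases Finset.mem_insert.1 hx with rfl | hx
        · simp only [hτsdef]
          rw [if_pos (by show (0 : ℕ) < t; omega)]
        · rw [Finset.mem_singleton.1 hx]
          simp only [hτsdef]
          rw [if_pos (by show (1 : ℕ) < t; omega)]
      have hcard := Finset.card_le_card hsub
      rwa [Finset.card_pair (by
        intro hE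
        rw [Fin.ext_iff] at hE
        simp at hE)] at hcard
    · rw [hBset, himg, hTcard]
      omega
    · rw [hBset]
      apply Finset.prod_pos
      intro i hi
      rw [Finset.mem_filter] at hi
      have hj := hi.2
      have hmem : τs i ∈ T := by
        simp only [hτsdef]
        rw [if_neg hj]
        exact hσ'T ((i : ℕ) - t) (by have := i.isLt; omega)
      exact lt_of_le_of_ne (hp _) (Ne.symm (hT2 _ hmem).2)
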